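/- Let λ₁, λ₂ : ℝ^N → ℝ be integrable, compactly supported filters, neither of which is zero almost everywhere, and let T : ℝ^N → ℝ^N be an invertible linear map. If Λ_{λ₁} f = 𝒯_T (Λ_{λ₂} f) for all locally integrable f, i.e. (f ⋆ λ₁)(x) = (f ⋆ λ₂)(T⁻¹ x) for all f and all x, then T is the identity map. -/

import Mathlib

open MeasureTheory

/-- If `λ₁, λ₂` are integrable compactly supported filters, neither of which
is zero almost everywhere, `T` is an invertible linear map, and
`Λ_{λ₁} f = 𝒯_T (Λ_{λ₂} f)` for all locally integrable `f`, i.e.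
`(f ⋆ λ₁)(x) = (f ⋆ λ₂)(T⁻¹ x)` for all such `f` and all `x`, then `T` is the identity. -/
theorem conv_eq_transformed_conv_implies_identity {N : ℕ}
    (lam1 lam2 : EuclideanSpace ℝ (Fin N) → ℝ)
    (h1_int : Integrable lam1) (h1_supp : HasCompactSupport lam1)
    (h1_ne : ¬ lam1 =ᵐ[volume] 0)
    (h2_int : Integrable lam2) (h2_supp : HasCompactSupport lam2)
    (h2_ne : ¬ lam2 =ᵐ[volume] 0)
    (T : EuclideanSpace ℝ (Fin N) ≃ₗ[ℝ] EuclideanSpace ℝ (Fin N))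
    (h : ∀ f : EuclideanSpace ℝ (Fin N) → ℝ, LocallyIntegrable f →
      ∀ x, (∫ y, f y * lam1 (x - y)) = ∫ y, f y * lam2 (T.symm x - y)) :
    ∀ x, T x = x := by
  classical
  -- integrability of reflected translates
  have hint : ∀ (g : EuclideanSpace ℝ (Fin N) → ℝ), Integrable g →
      ∀ x : EuclideanSpace ℝ (Fin N), Integrable (fun y => g (x - y)) := by
    intro g hg x
    have := (Measure.measurePreserving_sub_left
      (volume : Measure (EuclideanSpace ℝ (Fin N))) x).integrable_comp
      hg.aestronglyMeasurable
    exact this.mpr hg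
  -- Step 1: kernels agree a.e.
  have key : ∀ x : EuclideanSpace ℝ (Fin N),
      (fun y => lam1 (x - y)) =ᵐ[volume] fun y => lam2 (T.symm x - y) := by
    intro x
    have hg1 := hint lam1 h1_int x
    have hg2' : Integrable (fun y => lam2 (T.symm x - y)) := hint lam2 h2_int (T.symm x)
    refine ae_eq_of_forall_setIntegral_eq_of_sigmaFinite
      (fun s _ _ => hg1.integrableOn) (fun s _ _ => hg2'.integrableOn) ?_
    intro s hs hμs
    have hind : Integrable (s.indicator (fun _ : EuclideanSpace ℝ (Fin N) => (1:ℝ))) := by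
      rw [integrable_indicator_iff hs]
      exact (integrableOn_const_iff (C := (1:ℝ)) (by simp)).mpr (Or.inr hμs)
    have hloc := hind.locallyIntegrable
    have := h _ hloc x
    have conv : ∀ (g : EuclideanSpace ℝ (Fin N) → ℝ),
        (∫ y, s.indicator (fun _ : EuclideanSpace ℝ (Fin N) => (1:ℝ)) y * g y)
          = ∫ y in s, g y := by
      intro g
      rw [← integral_indicator hs]
      congr 1
      ext y
      by_cases hy : y ∈ s <;> simp [hy]
    rwa [conv, conv] at this
  -- Step 2: translation identity
  have key2 : ∀ x : EuclideanSpace ℝ (Fin N),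
      ∀ᵐ z : EuclideanSpace ℝ (Fin N), lam1 z = lam2 ((T.symm x - x) + z) := by
    intro x
    have hqmp := (Measure.measurePreserving_sub_left
      (volume : Measure (EuclideanSpace ℝ (Fin N))) x).quasiMeasurePreserving
    have := hqmp.ae_eq_comp (key x)
    filter_upwards [this] with z hz
    simp only [Function.comp] at hz
    have e1 : x - (x - z) = z := by abel
    have e2 : T.symm x - (x - z) = (T.symm x - x) + z := by abel
    rw [e1, e2] at hz
    exact hz
  -- Step 3: lam1 = lam2 a.e.
  have h12 : lam1 =ᵐ[volume] lam2 := by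
    filter_upwards [key2 0] with z hz
    simpa using hz
  -- Step 4: lam2 is a.e. invariant under translation by T.symm x - x
  have key3 : ∀ x : EuclideanSpace ℝ (Fin N),
      ∀ᵐ z : EuclideanSpace ℝ (Fin N), lam2 z = lam2 ((T.symm x - x) + z) := by
    intro x
    filter_upwards [key2 x, h12] with z hz he
    rw [← he]; exact hz
  -- Step 5: T.symm x = x for all x
  have hsymm : ∀ x : EuclideanSpace ℝ (Fin N), T.symm x = x := by
    intro x
    by_contra hne
    set v : EuclideanSpace ℝ (Fin N) := T.symm x - x with hv
    have hvne : v ≠ 0 := sub_ne_zero.mpr hne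
    have hvpos : 0 < ‖v‖ := norm_pos_iff.mpr hvne
    obtain ⟨R, hR⟩ := (h2_supp.isBounded).subset_closedBall 0
    have hR'nonneg : (0:ℝ) ≤ max R 0 := le_max_right _ _
    have hRsub : tsupport lam2 ⊆ Metric.closedBall 0 (max R 0) :=
      hR.trans (Metric.closedBall_subset_closedBall (le_max_left _ _))
    set t : ℝ := (2 * max R 0 + 1) / ‖v‖ with ht
    set w : EuclideanSpace ℝ (Fin N) := t • v with hw
    have hwnorm : ‖w‖ = 2 * max R 0 + 1 := by
      rw [hw, norm_smul, Real.norm_eq_abs, ht, abs_div, abs_of_nonneg (by positivity),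
        abs_of_nonneg hvpos.le, div_mul_cancel₀ _ hvpos.ne']
    have hcw : T.symm (t • x) - (t • x) = w := by
      rw [LinearEquiv.map_smul, hw, hv, smul_sub]
    have hper := key3 (t • x)
    rw [hcw] at hper
    apply h2_ne
    filter_upwards [hper] with z hz
    show lam2 z = 0
    by_contra hz0
    have hzs : z ∈ tsupport lam2 := subset_tsupport _ hz0
    have hz2 : (w + z) ∈ tsupport lam2 := by
      apply subset_tsupport
      rw [Function.mem_support, ← hz]; exact hz0
    have hb1 : ‖z‖ ≤ max R 0 := by simpa using hRsub hzs
    have hb2 : ‖w + z‖ ≤ max R 0 := by simpa using hRsub hz2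
    have hnrm : ‖w‖ ≤ ‖w + z‖ + ‖z‖ := by
      calc ‖w‖ = ‖(w + z) + (-z)‖ := by congr 1; abel
      _ ≤ ‖w + z‖ + ‖-z‖ := norm_add_le _ _
      _ = ‖w + z‖ + ‖z‖ := by rw [norm_neg]
    rw [hwnorm] at hnrm
    linarith
  intro x
  have := hsymm (T x)
  rw [LinearEquiv.symm_apply_apply] at this
  exact this.symm
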